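/- Let G be a group, H a normal subgroup, and χ : G → G/H the quotient map. For any subgroup K ≤ G containing H, the functor λ from the orbit category O(K) restricted to subgroups of K, into the undercategory of χ(K) (objects: pairs (L, morphism χ(L) → χ(K)) in O(G/H)), sending L to (L, identity coset morphism), is fully faithful and essentially surjective, hence an equivalence of categories. -/

import Mathlib

open CategoryTheory

/-- The orbit category of a group `G`: objects are the subgroups of `G`, and a
morphism from `H` to `K` is a coset `Kg` with `g H g⁻¹ ≤ K` (equivalently, a
`G`-equivariant map `G/H → G/K`). -/
structure OrbitCat (G : Type*) [Group G] where
  grp : Subgroup G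

namespace OrbitCat

variable {G : Type*} [Group G]

/-- Representatives of morphisms `H → K`: elements `g` with `g H g⁻¹ ≤ K`. -/
def Rep (H K : Subgroup G) := {g : G // ∀ h ∈ H, g * h * g⁻¹ ∈ K}

/-- Two representatives give the same morphism iff they lie in the same right
coset of `K`. -/
instance repSetoid (H K : Subgroup G) : Setoid (Rep H K) where
  r x y := x.1 * y.1⁻¹ ∈ K
  iseqv := by
    constructor
    · intro x
      simp only [mul_inv_cancel]
      exact K.one_mem
    · intro x y h
      have := K.inv_mem h
      simpa [mul_inv_rev] using this
    · intro x y z h1 h2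
      have := K.mul_mem h1 h2
      have e : x.1 * y.1⁻¹ * (y.1 * z.1⁻¹) = x.1 * z.1⁻¹ := by group
      rwa [e] at this

instance : Category (OrbitCat G) where
  Hom H K := Quotient (repSetoid H.grp K.grp)
  id H := ⟦⟨1, fun h hh => by simpa using hh⟩⟧
  comp {H K L} f g :=
    Quotient.lift₂ (fun x y =>
      (⟦⟨y.1 * x.1, fun h hh => by
          have hy := y.2 _ (x.2 h hh)
          have e : y.1 * (x.1 * h * x.1⁻¹) * y.1⁻¹ = y.1 * x.1 * h * (y.1 * x.1)⁻¹ := by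
            group
          rwa [e] at hy⟩⟧ : Quotient (repSetoid H.grp L.grp)))
      (fun x y x' y' hx hy => Quotient.sound (by
        have h1 : y.1 * (x.1 * x'.1⁻¹) * y.1⁻¹ ∈ L.grp := y.2 _ hx
        have h2 := L.grp.mul_mem h1 hy
        have e : y.1 * (x.1 * x'.1⁻¹) * y.1⁻¹ * (y.1 * y'.1⁻¹)
            = y.1 * x.1 * (y'.1 * x'.1)⁻¹ := by group
        rwa [e] at h2)) f g
  id_comp {H K} f := by
    refine Quotient.inductionOn f (fun x => Quotient.sound ?_)
    show x.1 * 1 * x.1⁻¹ ∈ K.grp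
    simp only [mul_one, mul_inv_cancel]
    exact K.grp.one_mem
  comp_id {H K} f := by
    refine Quotient.inductionOn f (fun x => Quotient.sound ?_)
    show 1 * x.1 * x.1⁻¹ ∈ K.grp
    simp only [one_mul, mul_inv_cancel]
    exact K.grp.one_mem
  assoc {H K L M} f g h := by
    refine Quotient.inductionOn₃ f g h (fun x y z => Quotient.sound ?_)
    show z.1 * (y.1 * x.1) * (z.1 * y.1 * x.1)⁻¹ ∈ M.grp
    have e : z.1 * (y.1 * x.1) * (z.1 * y.1 * x.1)⁻¹ = 1 := by group
    rw [e]
    exact M.grp.one_mem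

end OrbitCat


namespace OrbitCat

variable {G : Type*} [Group G]

/-- The functor `χ̄ : O(G) → O(G/H)` induced by the quotient map `χ : G → G/H`,
sending a subgroup `L` to `χ(L)` and a morphism `[g]` to `[χ(g)]`. -/
def chibar (H : Subgroup G) [H.Normal] : OrbitCat G ⥤ OrbitCat (G ⧸ H) where
  obj L := ⟨Subgroup.map (QuotientGroup.mk' H) L.grp⟩
  map {L₁ L₂} f := Quotient.lift
    (fun x => (⟦⟨QuotientGroup.mk' H x.1, by
        rintro h ⟨l, hl, rfl⟩
        exact ⟨x.1 * l * x.1⁻¹, x.2 l hl, by simp⟩⟩⟧ :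
      Quotient (repSetoid (Subgroup.map (QuotientGroup.mk' H) L₁.grp)
        (Subgroup.map (QuotientGroup.mk' H) L₂.grp))))
    (fun x y hxy => Quotient.sound (by
      exact ⟨x.1 * y.1⁻¹, hxy, by simp⟩)) f
  map_id L := Quotient.sound (by
    refine ⟨1, L.grp.one_mem, by simp⟩)
  map_comp {L₁ L₂ L₃} f g := by
    refine Quotient.inductionOn₂ f g (fun x y => Quotient.sound ?_)
    refine ⟨1, L₃.grp.one_mem, ?_⟩
    simp

/-- The inclusion functor `O(K) → O(G)` for a subgroup `K ≤ G`. -/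
def incl (K : Subgroup G) : OrbitCat ↥K ⥤ OrbitCat G where
  obj L := ⟨Subgroup.map K.subtype L.grp⟩
  map {L₁ L₂} f := Quotient.lift
    (fun x => (⟦⟨(x.1 : G), by
        rintro h ⟨l, hl, rfl⟩
        exact ⟨x.1 * l * x.1⁻¹, x.2 l hl, by simp⟩⟩⟧ :
      Quotient (repSetoid (Subgroup.map K.subtype L₁.grp)
        (Subgroup.map K.subtype L₂.grp))))
    (fun x y hxy => Quotient.sound ⟨x.1 * y.1⁻¹, hxy, by simp⟩) f
  map_id L := Quotient.sound (by
    refine ⟨1, L.grp.one_mem, by simp⟩)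
  map_comp {L₁ L₂ L₃} f g := by
    refine Quotient.inductionOn₂ f g (fun x y => Quotient.sound ?_)
    refine ⟨1, L₃.grp.one_mem, ?_⟩
    simp

/-- The comparison functor `λ` from the orbit category of `K` to the
overcategory `χ̄ ↓ (K/H)`, sending a subgroup `L ≤ K` to the pair
`(L, [1] : χ(L) → χ(K))`. -/
def lam (H : Subgroup G) [H.Normal] (K : Subgroup G) :
    OrbitCat ↥K ⥤ CategoryTheory.CostructuredArrow (chibar H)
      ⟨Subgroup.map (QuotientGroup.mk' H) K⟩ where
  obj L := CategoryTheory.CostructuredArrow.mk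
    (Y := (incl K).obj L)
    (⟦⟨1, by
      rintro h ⟨l, ⟨l', hl', rfl⟩, rfl⟩
      exact ⟨(l' : G), l'.2, by simp⟩⟩⟧)
  map {L₁ L₂} f := CategoryTheory.CostructuredArrow.homMk ((incl K).map f) (by
    refine Quotient.inductionOn f (fun x => Quotient.sound ?_)
    exact ⟨(x.1 : G), x.1.2, by simp⟩)
  map_id L := by
    apply CategoryTheory.CostructuredArrow.hom_ext
    simp [Functor.map_id]
  map_comp {L₁ L₂ L₃} f g := by
    apply CategoryTheory.CostructuredArrow.hom_ext
    simp [Functor.map_comp]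

end OrbitCat

namespace OrbitCatAux

open OrbitCat

variable {G : Type*} [Group G]

lemma mem_of_chi (H : Subgroup G) [H.Normal] {K : Subgroup G} (hHK : H ≤ K) {g : G}
    (hg : (QuotientGroup.mk' H) g ∈ Subgroup.map (QuotientGroup.mk' H) K) : g ∈ K := by
  obtain ⟨k, hk, hke⟩ := hg
  have hke' : (k : G ⧸ H) = (g : G ⧸ H) := hke
  have : k⁻¹ * g ∈ H := QuotientGroup.eq.mp hke'
  have := K.mul_mem hk (hHK this)
  simpa using this

lemma lam_faithful (H : Subgroup G) [H.Normal] (K : Subgroup G) :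
    (lam H K).Faithful := by
  constructor
  intro L₁ L₂ f g h
  have h' : (incl K).map f = (incl K).map g :=
    congrArg CategoryTheory.CommaMorphism.left h
  revert h'
  refine Quotient.inductionOn₂ f g (fun x y h' => ?_)
  have hr := Quotient.exact h'
  obtain ⟨l, hl, hle⟩ := hr
  apply Quotient.sound
  show x.1 * y.1⁻¹ ∈ L₂.grp
  have : (l : G) = ((x.1 * y.1⁻¹ : ↥K) : G) := by simpa using hle
  have : l = x.1 * y.1⁻¹ := Subtype.ext this
  rwa [← this]

lemma lam_full (H : Subgroup G) [H.Normal] (K : Subgroup G) (hHK : H ≤ K) :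
    (lam H K).Full := by
  constructor
  intro L₁ L₂ t
  obtain ⟨f, hf⟩ := Quotient.exists_rep t.left
  have hw := t.w
  rw [← hf] at hw
  have hr := Quotient.exact hw
  have hfK : f.1 ∈ K := by
    apply mem_of_chi H hHK
    have : (1 : G ⧸ H) * (QuotientGroup.mk' H) f.1 * ((1 : G ⧸ H) * 1)⁻¹ ∈
        Subgroup.map (QuotientGroup.mk' H) K := hr
    simpa using this
  refine ⟨⟦⟨⟨f.1, hfK⟩, ?_⟩⟧, ?_⟩
  · intro l hl
    obtain ⟨l₂, hl₂, hl₂e⟩ := f.2 (l : G) ⟨l, hl, rfl⟩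
    have : l₂ = (⟨f.1, hfK⟩ : ↥K) * l * (⟨f.1, hfK⟩ : ↥K)⁻¹ := by
      apply Subtype.ext
      simpa using hl₂e
    rwa [← this]
  · apply CategoryTheory.CostructuredArrow.hom_ext
    rw [← hf]
    exact Quotient.sound (show (f.1 : G) * f.1⁻¹ ∈ Subgroup.map K.subtype L₂.grp by
      simp only [mul_inv_cancel]; exact Subgroup.one_mem _)

lemma lam_essSurj (H : Subgroup G) [H.Normal] (K : Subgroup G) (hHK : H ≤ K) :
    (lam H K).EssSurj := by
  constructor
  intro X
  obtain ⟨y, hy⟩ := Quotient.exists_rep X.hom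
  obtain ⟨g, hg⟩ := QuotientGroup.mk'_surjective H y.1
  set M := X.left.grp with hM
  have hconj : ∀ m ∈ M, g * m * g⁻¹ ∈ K := by
    intro m hm
    apply mem_of_chi H hHK
    have := y.2 ((QuotientGroup.mk' H) m) ⟨m, hm, rfl⟩
    simp only [map_mul, map_inv, hg]
    exact this
  set L : Subgroup ↥K :=
    (Subgroup.map ((MulAut.conj g : G ≃* G) : G →* G) M).subgroupOf K with hL
  refine ⟨⟨L⟩, ⟨CategoryTheory.CostructuredArrow.isoMk ?_ ?_⟩⟩
  · refine ⟨⟦⟨g⁻¹, ?_⟩⟧, ⟦⟨g, ?_⟩⟧, ?_, ?_⟩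
    · rintro a ⟨k, hk, rfl⟩
      obtain ⟨m, hm, hme⟩ := hk
      have h1 : (K.subtype k : G) = g * m * g⁻¹ := by rw [← hme]; rfl
      have h2 : g⁻¹ * (K.subtype k) * g⁻¹⁻¹ = m := by rw [h1]; group
      rw [h2]
      exact hm
    · intro m hm
      refine ⟨⟨g * m * g⁻¹, hconj m hm⟩, ?_, rfl⟩
      show (⟨g * m * g⁻¹, hconj m hm⟩ : ↥K) ∈ L
      show ((⟨g * m * g⁻¹, hconj m hm⟩ : ↥K) : G) ∈
        Subgroup.map ((MulAut.conj g : G ≃* G) : G →* G) M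
      exact ⟨m, hm, rfl⟩
    · apply Quotient.sound
      show g * g⁻¹ * (1 : G)⁻¹ ∈ Subgroup.map K.subtype L
      simp only [mul_inv_cancel, inv_one, mul_one]
      exact Subgroup.one_mem _
    · apply Quotient.sound
      show g⁻¹ * g * (1 : G)⁻¹ ∈ M
      simp only [inv_mul_cancel, inv_one, mul_one]
      exact Subgroup.one_mem _
  · rw [← hy]
    apply Quotient.sound
    show y.1 * (QuotientGroup.mk' H) g⁻¹ * (1 : G ⧸ H)⁻¹ ∈
      Subgroup.map (QuotientGroup.mk' H) K
    rw [← hg]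
    simp only [map_inv, mul_inv_cancel, inv_one, mul_one]
    exact Subgroup.one_mem _

end OrbitCatAux

/-- For a normal subgroup `H ⊴ G` and a subgroup `K` containing `H`, the functor
`λ : O(K) → χ̄ ↓ (K/H)`, `L ↦ (L, [1])`, is fully faithful and essentially
surjective, hence an equivalence of categories. -/
theorem stmt_10 {G : Type*} [Group G] (H : Subgroup G) [H.Normal]
    (K : Subgroup G) (hHK : H ≤ K) :
    (OrbitCat.lam H K).IsEquivalence ∧ (OrbitCat.lam H K).Full ∧
      (OrbitCat.lam H K).Faithful ∧ (OrbitCat.lam H K).EssSurj := by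
  haveI h1 : (OrbitCat.lam H K).Full := OrbitCatAux.lam_full H K hHK
  haveI h2 : (OrbitCat.lam H K).Faithful := OrbitCatAux.lam_faithful H K
  haveI h3 : (OrbitCat.lam H K).EssSurj := OrbitCatAux.lam_essSurj H K hHK
  exact ⟨⟨h2, h1, h3⟩, h1, h2, h3⟩
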